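/- S = P_S ∪ L_S is a resolving set of the incidence graph of a finite projective plane if and only if: through any point P there is at most one line outside L_S not blocked by P_S \ {P}, and on any line ℓ there is at most one point outside P_S not covered by L_S \ {ℓ}. -/

import Mathlib

open Configuration

variable (P L : Type*) [Membership P L]

/-- The incidence graph of an incidence structure: vertices are points and lines,
with a point adjacent to a line iff it lies on it. -/
def incGraph : SimpleGraph (P ⊕ L) where
  Adj x y := match x, y with
    | .inl p, .inr l => p ∈ l
    | .inr l, .inl p => p ∈ l
    | _, _ => False
  symm := ⟨by rintro (p | l) (p' | l') h <;> simp_all⟩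
  loopless := ⟨by rintro (p | l) h <;> simp_all⟩

/-- A set of vertices is resolving if the ordered distance lists to its elements
distinguish all vertices. -/
def IsResolvingSet (S : Set (P ⊕ L)) : Prop :=
  ∀ x y : P ⊕ L, (∀ s ∈ S, (incGraph P L).dist x s = (incGraph P L).dist y s) → x = y

/-- A vertex `x` is resolved by `S` if no other vertex has the same distance list. -/
def ResolvedBy (S : Set (P ⊕ L)) (x : P ⊕ L) : Prop :=
  ∀ y : P ⊕ L, (∀ s ∈ S, (incGraph P L).dist x s = (incGraph P L).dist y s) → y = x

/-- The metric dimension: the least size of a resolving set. -/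
noncomputable def metricDim : ℕ :=
  sInf {n | ∃ S : Finset (P ⊕ L), S.card = n ∧ IsResolvingSet P L ↑S}

section Helpers

set_option linter.unusedSectionVars false

variable {P L}

/-- Parity function on the bipartite vertex set. -/
private def side : P ⊕ L → ZMod 2 := Sum.elim 0 1

private lemma side_adj {x y : P ⊕ L} (h : (incGraph P L).Adj x y) : side x + side y = 1 := by
  rcases x with p | l <;> rcases y with q | m <;> simp_all [side] <;> exact h.elim

private lemma walk_parity {x y : P ⊕ L} (w : (incGraph P L).Walk x y) :
    (w.length : ZMod 2) = side x + side y := by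
  induction w with
  | nil => simp [CharTwo.add_self_eq_zero]
  | @cons u v w h p ih =>
    have h1 := side_adj h
    have h2 : (2 : ZMod 2) = 0 := rfl
    simp only [SimpleGraph.Walk.length_cons, Nat.cast_add, Nat.cast_one, ih]
    linear_combination h1 + (1 - side u) * h2

private lemma dist_parity {x y : P ⊕ L} (h : (incGraph P L).Reachable x y) :
    ((incGraph P L).dist x y : ZMod 2) = side x + side y := by
  obtain ⟨w, hw⟩ := h.exists_walk_length_eq_dist
  rw [← hw]; exact walk_parity w

variable [ProjectivePlane P L] [Finite P] [Finite L]

private lemma exists_mem_line (l : L) : ∃ p : P, p ∈ l := by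
  have h := ProjectivePlane.two_lt_pointCount P l
  rw [pointCount] at h
  obtain ⟨⟨p, hp⟩, -⟩ := (Nat.card_pos_iff (α := {p : P // p ∈ l})).mp (by omega)
  exact ⟨p, hp⟩

private lemma exists_two_lines (p : P) : ∃ l m : L, l ≠ m ∧ p ∈ l ∧ p ∈ m := by
  have h := ProjectivePlane.two_lt_lineCount L p
  rw [lineCount] at h
  have : Nontrivial {l : L // p ∈ l} := Finite.one_lt_card_iff_nontrivial.mp (by omega)
  obtain ⟨⟨l, hl⟩, ⟨m, hm⟩, hne⟩ := this
  exact ⟨l, m, fun h => hne (Subtype.ext h), hl, hm⟩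

private lemma dist_pl {p : P} {l : L} (h : p ∈ l) :
    (incGraph P L).dist (.inl p) (.inr l) = 1 :=
  SimpleGraph.dist_eq_one_iff_adj.mpr h

private lemma dist_pp {p q : P} (h : p ≠ q) :
    (incGraph P L).dist (.inl p) (.inl q) = 2 := by
  have hax := HasLines.mkLine_ax (L := L) h
  let w : (incGraph P L).Walk (.inl p) (.inl q) :=
    .cons (show (incGraph P L).Adj (.inl p) (.inr (HasLines.mkLine h)) from hax.1)
      (.cons (show (incGraph P L).Adj (.inr (HasLines.mkLine h)) (.inl q) from hax.2) .nil)
  have h2 : (incGraph P L).dist (.inl p) (.inl q) ≤ 2 := SimpleGraph.dist_le w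
  have hr : (incGraph P L).Reachable (.inl p) (.inl q) := ⟨w⟩
  have h0 : (incGraph P L).dist (.inl p) (.inl q) ≠ 0 := fun hc =>
    h (by simpa using hr.dist_eq_zero_iff.mp hc)
  have h1 : (incGraph P L).dist (.inl p) (.inl q) ≠ 1 := fun hc =>
    (SimpleGraph.dist_eq_one_iff_adj.mp hc : False)
  omega

private lemma dist_ll {l m : L} (h : l ≠ m) :
    (incGraph P L).dist (.inr l) (.inr m) = 2 := by
  have hax := HasPoints.mkPoint_ax (P := P) h
  let w : (incGraph P L).Walk (.inr l) (.inr m) :=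
    .cons (show (incGraph P L).Adj (.inr l) (.inl (HasPoints.mkPoint h)) from hax.1)
      (.cons (show (incGraph P L).Adj (.inl (HasPoints.mkPoint h)) (.inr m) from hax.2) .nil)
  have h2 : (incGraph P L).dist (.inr l) (.inr m) ≤ 2 := SimpleGraph.dist_le w
  have hr : (incGraph P L).Reachable (.inr l) (.inr m) := ⟨w⟩
  have h0 : (incGraph P L).dist (.inr l) (.inr m) ≠ 0 := fun hc =>
    h (by simpa using hr.dist_eq_zero_iff.mp hc)
  have h1 : (incGraph P L).dist (.inr l) (.inr m) ≠ 1 := fun hc =>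
    (SimpleGraph.dist_eq_one_iff_adj.mp hc : False)
  omega

private lemma dist_pl' {p : P} {l : L} (h : p ∉ l) :
    (incGraph P L).dist (.inl p) (.inr l) = 3 := by
  obtain ⟨x, hx⟩ := exists_mem_line (P := P) l
  have hpx : p ≠ x := fun hc => h (hc ▸ hx)
  have hax := HasLines.mkLine_ax (L := L) hpx
  let w : (incGraph P L).Walk (.inl p) (.inr l) :=
    .cons (show (incGraph P L).Adj (.inl p) (.inr (HasLines.mkLine hpx)) from hax.1)
      (.cons (show (incGraph P L).Adj (.inr (HasLines.mkLine hpx)) (.inl x) from hax.2)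
        (.cons (show (incGraph P L).Adj (.inl x) (.inr l) from hx) .nil))
  have h3 : (incGraph P L).dist (.inl p) (.inr l) ≤ 3 := SimpleGraph.dist_le w
  have hr : (incGraph P L).Reachable (.inl p) (.inr l) := ⟨w⟩
  have hpar := dist_parity hr
  have hside : side (Sum.inl p : P ⊕ L) + side (Sum.inr l : P ⊕ L) = 1 := by simp [side]
  rw [hside] at hpar
  have hmod : (incGraph P L).dist (.inl p) (.inr l) % 2 = 1 % 2 := by
    rwa [← Nat.cast_one, ZMod.natCast_eq_natCast_iff'] at hpar
  have h1 : (incGraph P L).dist (.inl p) (.inr l) ≠ 1 := fun hc =>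
    h (SimpleGraph.dist_eq_one_iff_adj.mp hc)
  omega

/-- distance from a pair of points: 0 or 2 -/
private lemma dist_pp_cases (p q : P) :
    (incGraph P L).dist (.inl p) (.inl q) = 0 ∨ (incGraph P L).dist (.inl p) (.inl q) = 2 := by
  by_cases h : p = q
  · subst h; exact Or.inl SimpleGraph.dist_self
  · exact Or.inr (dist_pp h)

private lemma dist_ll_cases (l m : L) :
    (incGraph P L).dist (.inr l) (.inr m) = 0 ∨ (incGraph P L).dist (.inr l) (.inr m) = 2 := by
  by_cases h : l = m
  · subst h; exact Or.inl SimpleGraph.dist_self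
  · exact Or.inr (dist_ll h)

private lemma dist_pl_cases (p : P) (l : L) :
    (incGraph P L).dist (.inl p) (.inr l) = 1 ∨ (incGraph P L).dist (.inl p) (.inr l) = 3 := by
  by_cases h : p ∈ l
  · exact Or.inl (dist_pl h)
  · exact Or.inr (dist_pl' h)

private lemma dist_lp {p : P} {l : L} (h : p ∈ l) :
    (incGraph P L).dist (.inr l) (.inl p) = 1 := by
  rw [SimpleGraph.dist_comm]; exact dist_pl h

private lemma dist_lp' {p : P} {l : L} (h : p ∉ l) :
    (incGraph P L).dist (.inr l) (.inl p) = 3 := by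
  rw [SimpleGraph.dist_comm]; exact dist_pl' h

private lemma dist_lp_cases (l : L) (p : P) :
    (incGraph P L).dist (.inr l) (.inl p) = 1 ∨ (incGraph P L).dist (.inr l) (.inl p) = 3 := by
  rw [SimpleGraph.dist_comm]; exact dist_pl_cases p l

end Helpers

/-- characterization of resolving sets by properties PA and PA'. -/
theorem isResolvingSet_iff_PA_PA'
    {P L : Type*} [Membership P L] [ProjectivePlane P L] [Finite P] [Finite L]
    (S : Set (P ⊕ L)) :
    IsResolvingSet P L S ↔
      -- PA: through any point p at most one line outside L_S not blocked by P_S \ {p}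
      (∀ p : P,
        ({l : L | Sum.inr l ∉ S ∧ p ∈ l ∧
          ∀ x : P, Sum.inl x ∈ S → x ≠ p → x ∉ l}).Subsingleton) ∧
      -- PA': on any line l at most one point outside P_S not covered by L_S \ {l}
      (∀ l : L,
        ({p : P | Sum.inl p ∉ S ∧ p ∈ l ∧
          ∀ m : L, Sum.inr m ∈ S → m ≠ l → p ∉ m}).Subsingleton) := by
  constructor
  · intro hres
    constructor
    · -- PA from resolving
      intro p l hl m hm
      obtain ⟨hlS, hpl, hlb⟩ := hl
      obtain ⟨hmS, hpm, hmb⟩ := hm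
      have key : (Sum.inr l : P ⊕ L) = Sum.inr m := by
        apply hres
        rintro (x | n) hs
        · by_cases hxl : x ∈ l
          · have hxp : x = p := by
              by_contra hxp; exact hlb x hs hxp hxl
            subst hxp
            rw [dist_lp hxl, dist_lp hpm]
          · have hxm : x ∉ m := by
              intro hxm
              have hxp : x = p := by
                by_contra hxp; exact hmb x hs hxp hxm
              subst hxp; exact hxl hpl
            rw [dist_lp' hxl, dist_lp' hxm]
        · have h1 : l ≠ n := fun h => hlS (h ▸ hs)
          have h2 : m ≠ n := fun h => hmS (h ▸ hs)
          rw [dist_ll h1, dist_ll h2]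
      exact Sum.inr_injective key
    · -- PA' from resolving
      intro l p hp q hq
      obtain ⟨hpS, hpl, hpb⟩ := hp
      obtain ⟨hqS, hql, hqb⟩ := hq
      have key : (Sum.inl p : P ⊕ L) = Sum.inl q := by
        apply hres
        rintro (x | n) hs
        · have h1 : p ≠ x := fun h => hpS (h ▸ hs)
          have h2 : q ≠ x := fun h => hqS (h ▸ hs)
          rw [dist_pp h1, dist_pp h2]
        · by_cases hpn : p ∈ n
          · have hnl : n = l := by
              by_contra hnl; exact hpb n hs hnl hpn
            subst hnl
            rw [dist_pl hpn, dist_pl hql]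
          · have hqn : q ∉ n := by
              intro hqn
              have hnl : n = l := by
                by_contra hnl; exact hqb n hs hnl hqn
              subst hnl; exact hpn hpl
            rw [dist_pl' hpn, dist_pl' hqn]
      exact Sum.inl_injective key
  · rintro ⟨hPA, hPA'⟩ x y hxy
    have hSne : ∃ s, s ∈ S := by
      by_contra hS
      push_neg at hS
      obtain ⟨p0, -, -, -, -, -, -⟩ := ProjectivePlane.exists_config (P := P) (L := L)
      obtain ⟨l, m, hlm, hpl, hpm⟩ := exists_two_lines (L := L) p0
      exact hlm (hPA p0 ⟨hS _, hpl, fun x hx => absurd hx (hS _)⟩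
        ⟨hS _, hpm, fun x hx => absurd hx (hS _)⟩)
    obtain ⟨s0, hs0⟩ := hSne
    rcases x with p | l <;> rcases y with q | m
    · -- point-point
      by_cases hpq : p = q
      · rw [hpq]
      have hpS : Sum.inl p ∉ S := by
        intro hc
        have h := hxy _ hc
        rw [SimpleGraph.dist_self, dist_pp (Ne.symm hpq)] at h
        omega
      have hqS : Sum.inl q ∉ S := by
        intro hc
        have h := hxy _ hc
        rw [SimpleGraph.dist_self, dist_pp hpq] at h
        omega
      have hax := HasLines.mkLine_ax (L := L) hpq
      have hmemp : p ∈ {p' : P | Sum.inl p' ∉ S ∧ p' ∈ HasLines.mkLine (L := L) hpq ∧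
          ∀ m : L, Sum.inr m ∈ S → m ≠ HasLines.mkLine (L := L) hpq → p' ∉ m} := by
        refine ⟨hpS, hax.1, fun n hnS hnl hpn => ?_⟩
        have h := hxy _ hnS
        rw [dist_pl hpn] at h
        by_cases hqn : q ∈ n
        · exact hnl ((Nondegenerate.eq_or_eq hpn hqn hax.1 hax.2).resolve_left hpq)
        · rw [dist_pl' hqn] at h; omega
      have hmemq : q ∈ {p' : P | Sum.inl p' ∉ S ∧ p' ∈ HasLines.mkLine (L := L) hpq ∧
          ∀ m : L, Sum.inr m ∈ S → m ≠ HasLines.mkLine (L := L) hpq → p' ∉ m} := by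
        refine ⟨hqS, hax.2, fun n hnS hnl hqn => ?_⟩
        have h := hxy _ hnS
        rw [dist_pl hqn] at h
        by_cases hpn : p ∈ n
        · exact hnl ((Nondegenerate.eq_or_eq hpn hqn hax.1 hax.2).resolve_left hpq)
        · rw [dist_pl' hpn] at h; omega
      exact congrArg Sum.inl (hPA' (HasLines.mkLine (L := L) hpq) hmemp hmemq)
    · -- point-line: impossible
      exfalso
      have h := hxy _ hs0
      rcases s0 with z | n
      · have e1 := dist_pp_cases (L := L) p z
        have e2 := dist_lp_cases m z
        omega
      · rcases dist_pl_cases p n with e1 | e1 <;> rcases dist_ll_cases (P := P) m n with e2 | e2 <;>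
          omega
    · -- line-point: impossible
      exfalso
      have h := hxy _ hs0
      rcases s0 with z | n
      · have e1 := dist_lp_cases l z
        have e2 := dist_pp_cases (L := L) q z
        omega
      · rcases dist_pl_cases q n with e1 | e1 <;> rcases dist_ll_cases (P := P) l n with e2 | e2 <;>
          omega
    · -- line-line
      by_cases hlm : l = m
      · rw [hlm]
      have hlS : Sum.inr l ∉ S := by
        intro hc
        have h := hxy _ hc
        rw [SimpleGraph.dist_self, dist_ll (Ne.symm hlm)] at h
        omega
      have hmS : Sum.inr m ∉ S := by
        intro hc
        have h := hxy _ hc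
        rw [SimpleGraph.dist_self, dist_ll hlm] at h
        omega
      have hax := HasPoints.mkPoint_ax (P := P) hlm
      have hmeml : l ∈ {l' : L | Sum.inr l' ∉ S ∧ HasPoints.mkPoint (P := P) hlm ∈ l' ∧
          ∀ x : P, Sum.inl x ∈ S → x ≠ HasPoints.mkPoint (P := P) hlm → x ∉ l'} := by
        refine ⟨hlS, hax.1, fun x hxS hxp hxl => ?_⟩
        have h := hxy _ hxS
        rw [dist_lp hxl] at h
        by_cases hxm : x ∈ m
        · exact hxp ((Nondegenerate.eq_or_eq hxl hax.1 hxm hax.2).resolve_right hlm)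
        · rw [dist_lp' hxm] at h; omega
      have hmemm : m ∈ {l' : L | Sum.inr l' ∉ S ∧ HasPoints.mkPoint (P := P) hlm ∈ l' ∧
          ∀ x : P, Sum.inl x ∈ S → x ≠ HasPoints.mkPoint (P := P) hlm → x ∉ l'} := by
        refine ⟨hmS, hax.2, fun x hxS hxp hxm => ?_⟩
        have h := hxy _ hxS
        rw [dist_lp hxm] at h
        by_cases hxl : x ∈ l
        · exact hxp ((Nondegenerate.eq_or_eq hxl hax.1 hxm hax.2).resolve_right hlm)
        · rw [dist_lp' hxl] at h; omega
      exact congrArg Sum.inr (hPA (HasPoints.mkPoint (P := P) hlm) hmeml hmemm)
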